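/- For every integer m ≥ 2, every real μ ≥ 0, and all real α, β > 0, Σ_{k=1}^{m−1} [ (μ+α)_{2k}(μ+β)_{2(m−k)} − (μ)_{2k}(μ+α+β)_{2(m−k)} ] / ( (2k−1)! (2(m−k)−1)! ) > 0. Equivalently, the function ψ̃(μ;x) = Σ_{n≥1} (μ)_{2n} x^n/(2n−1)! is coefficient-wise log-concave in μ with strictly positive Turánian coefficients. -/

import Mathlib

/-- The rising factorial (Pochhammer symbol) `(μ)_n = μ(μ+1)⋯(μ+n−1)`. -/
noncomputable def risingFactorial (μ : ℝ) : ℕ → ℝ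
  | 0 => 1
  | n + 1 => risingFactorial μ n * (μ + n)

namespace StmtAux

open Finset PowerSeries

lemma rf_zero (c : ℝ) : risingFactorial c 0 = 1 := rfl

lemma rf_succ (c : ℝ) (n : ℕ) :
    risingFactorial c (n + 1) = risingFactorial c n * (c + n) := rfl

lemma rf_pos {c : ℝ} (hc : 0 < c) (n : ℕ) : 0 < risingFactorial c n := by
  induction n with
  | zero => norm_num [rf_zero]
  | succ n ih =>
      rw [rf_succ]
      exact mul_pos ih (by positivity)

lemma rf_succ_left (c : ℝ) (n : ℕ) :
    risingFactorial c (n + 1) = c * risingFactorial (c + 1) n := by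
  induction n with
  | zero => simp [rf_succ, rf_zero]
  | succ n ih =>
      rw [rf_succ, ih, rf_succ]
      push_cast
      ring

/-- Chu–Vandermonde for rising factorials. -/
lemma vander (c d : ℝ) : ∀ n : ℕ,
    ∑ x ∈ Finset.HasAntidiagonal.antidiagonal n,
      (n.choose x.1 : ℝ) * risingFactorial c x.1 * risingFactorial d x.2
      = risingFactorial (c + d) n := by
  intro n
  induction n with
  | zero => simp [rf_zero]
  | succ n ih =>
      rw [Finset.Nat.sum_antidiagonal_succ]
      have hsplit : ∀ x ∈ Finset.HasAntidiagonal.antidiagonal n,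
          ((n + 1).choose (x.1 + 1) : ℝ) * risingFactorial c (x.1 + 1) * risingFactorial d x.2
            = (n.choose x.1 : ℝ) * risingFactorial c x.1 * risingFactorial d x.2 * (c + x.1)
              + (n.choose (x.1 + 1) : ℝ) * risingFactorial c (x.1 + 1) * risingFactorial d x.2 := by
        intro x hx
        rw [Nat.choose_succ_succ, rf_succ]
        push_cast
        ring
      rw [Finset.sum_congr rfl hsplit, Finset.sum_add_distrib]
      have h1 := Finset.Nat.sum_antidiagonal_succ (n := n)
        (f := fun x => (n.choose x.1 : ℝ) * risingFactorial c x.1 * risingFactorial d x.2)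
      have h2 := Finset.Nat.sum_antidiagonal_succ' (n := n)
        (f := fun x => (n.choose x.1 : ℝ) * risingFactorial c x.1 * risingFactorial d x.2)
      simp only [Nat.choose_zero_right, Nat.cast_one, rf_zero, one_mul, mul_one,
        Nat.choose_succ_self, Nat.cast_zero, zero_mul] at h1 h2
      -- h1 : ∑_{antidiag (n+1)} F = rf d (n+1) + ∑_{antidiag n} F(p+1,q)
      -- h2 : ∑_{antidiag (n+1)} F = 0 + ∑_{antidiag n} F(p,q+1)
      have hT : ∑ x ∈ Finset.HasAntidiagonal.antidiagonal n,
          (n.choose (x.1 + 1) : ℝ) * risingFactorial c (x.1 + 1) * risingFactorial d x.2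
          = (∑ x ∈ Finset.HasAntidiagonal.antidiagonal n,
              (n.choose x.1 : ℝ) * risingFactorial c x.1 * risingFactorial d (x.2 + 1))
            - risingFactorial d (n + 1) := by
        linarith [h1, h2]
      rw [hT]
      have hfin : ∀ x ∈ Finset.HasAntidiagonal.antidiagonal n,
          (n.choose x.1 : ℝ) * risingFactorial c x.1 * risingFactorial d x.2 * (c + x.1)
            + (n.choose x.1 : ℝ) * risingFactorial c x.1 * risingFactorial d (x.2 + 1)
          = ((n.choose x.1 : ℝ) * risingFactorial c x.1 * risingFactorial d x.2) * (c + d + n) := by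
        intro x hx
        have hx' : x.1 + x.2 = n := Finset.HasAntidiagonal.mem_antidiagonal.mp hx
        have hcast : (x.1 : ℝ) + (x.2 : ℝ) = n := by exact_mod_cast congrArg Nat.cast hx'
        rw [rf_succ, ← hcast]
        ring
      have hcomb : (∑ x ∈ Finset.HasAntidiagonal.antidiagonal n,
            (n.choose x.1 : ℝ) * risingFactorial c x.1 * risingFactorial d x.2 * (c + x.1))
          + (∑ x ∈ Finset.HasAntidiagonal.antidiagonal n,
            (n.choose x.1 : ℝ) * risingFactorial c x.1 * risingFactorial d (x.2 + 1))
          = (∑ x ∈ Finset.HasAntidiagonal.antidiagonal n,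
              (n.choose x.1 : ℝ) * risingFactorial c x.1 * risingFactorial d x.2) * (c + d + n) := by
        rw [← Finset.sum_add_distrib, Finset.sum_congr rfl hfin, ← Finset.sum_mul]
      rw [rf_succ (c + d) n, ← ih]
      simp only [Nat.choose_zero_right, Nat.cast_one, rf_zero, one_mul]
      linear_combination hcomb

/-- `(1-t)^{-c}` as a formal power series. -/
noncomputable def Us (c : ℝ) : PowerSeries ℝ :=
  PowerSeries.mk fun n => risingFactorial c n / n.factorial

/-- `(1+t)^{-c}` as a formal power series. -/
noncomputable def Vs (c : ℝ) : PowerSeries ℝ := rescale (-1) (Us c)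

lemma coeff_Us (c : ℝ) (n : ℕ) :
    (coeff n) (Us c) = risingFactorial c n / n.factorial := coeff_mk _ _

lemma coeff_Vs (c : ℝ) (n : ℕ) :
    (coeff n) (Vs c) = (-1) ^ n * (risingFactorial c n / n.factorial) := by
  rw [Vs, coeff_rescale, coeff_Us]

lemma Us_mul (c d : ℝ) : Us c * Us d = Us (c + d) := by
  ext n
  rw [coeff_mul, coeff_Us]
  have : ∀ x ∈ Finset.HasAntidiagonal.antidiagonal n,
      (coeff x.1) (Us c) * (coeff x.2) (Us d)
        = (n.choose x.1 : ℝ) * risingFactorial c x.1 * risingFactorial d x.2 / n.factorial := by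
    intro x hx
    have hx' : x.1 + x.2 = n := Finset.HasAntidiagonal.mem_antidiagonal.mp hx
    have hle : x.1 ≤ n := by omega
    have hfac : (n.choose x.1 : ℝ) * x.1.factorial * (n - x.1).factorial = n.factorial := by
      exact_mod_cast congrArg Nat.cast (Nat.choose_mul_factorial_mul_factorial hle)
    have h2 : n - x.1 = x.2 := by omega
    rw [h2] at hfac
    rw [coeff_Us, coeff_Us]
    have f1 : (x.1.factorial : ℝ) ≠ 0 := by positivity
    have f2 : (x.2.factorial : ℝ) ≠ 0 := by positivity
    have f3 : (n.factorial : ℝ) ≠ 0 := by positivity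
    have hch : (n.choose x.1 : ℝ) = n.factorial / (x.1.factorial * x.2.factorial) := by
      rw [eq_div_iff (by positivity)]
      linear_combination hfac
    rw [hch]
    field_simp
  rw [Finset.sum_congr rfl this, ← Finset.sum_div, vander]

lemma Vs_mul (c d : ℝ) : Vs c * Vs d = Vs (c + d) := by
  rw [Vs, Vs, Vs, ← map_mul, Us_mul]

/-- odd part series (times two). -/
noncomputable def Ds (c : ℝ) : PowerSeries ℝ := Us c - Vs c

lemma coeff_Ds (c : ℝ) (n : ℕ) :
    (coeff n) (Ds c) = (1 - (-1) ^ n) * (risingFactorial c n / n.factorial) := by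
  rw [Ds, map_sub, coeff_Us, coeff_Vs]
  ring

lemma coeff_Ds_nonneg {c : ℝ} (hc : 0 ≤ c) (n : ℕ) : 0 ≤ (coeff n) (Ds c) := by
  rw [coeff_Ds]
  rcases Nat.even_or_odd n with h | h
  · rw [h.neg_one_pow]; norm_num
  · rw [h.neg_one_pow]
    have h1 : 0 ≤ risingFactorial c n := by
      rcases eq_or_lt_of_le hc with h' | h'
      · cases n with
        | zero => norm_num [rf_zero]
        | succ n => rw [rf_succ_left, ← h']; simp
      · exact le_of_lt (rf_pos h' n)
    positivity

lemma one_sub_X_mul_Us (c : ℝ) : (1 - X) * Us (c + 1) = Us c := by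
  ext n
  rw [sub_mul, one_mul, map_sub]
  cases n with
  | zero =>
      have hx : (coeff 0) (X * Us (c + 1)) = 0 := by
        have := coeff_X_pow_mul' (Us (c + 1)) 1 0
        simpa using this
      rw [hx, sub_zero, coeff_Us, coeff_Us, rf_zero, rf_zero]
  | succ n =>
      rw [coeff_succ_X_mul, coeff_Us, coeff_Us, coeff_Us]
      rw [rf_succ_left c n, rf_succ]
      have f1 : ((n + 1).factorial : ℝ) = (n + 1) * n.factorial := by
        rw [Nat.factorial_succ]; push_cast; ring
      rw [f1]
      have f2 : (n.factorial : ℝ) ≠ 0 := by positivity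
      field_simp
      ring

lemma one_add_X_mul_Vs (c : ℝ) : (1 + X) * Vs (c + 1) = Vs c := by
  ext n
  rw [add_mul, one_mul, map_add]
  cases n with
  | zero =>
      have hx : (coeff 0) (X * Vs (c + 1)) = 0 := by
        have := coeff_X_pow_mul' (Vs (c + 1)) 1 0
        simpa using this
      rw [hx, add_zero, coeff_Vs, coeff_Vs, rf_zero, rf_zero]
  | succ n =>
      rw [coeff_succ_X_mul, coeff_Vs, coeff_Vs, coeff_Vs]
      rw [rf_succ_left c n, rf_succ]
      have f1 : ((n + 1).factorial : ℝ) = (n + 1) * n.factorial := by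
        rw [Nat.factorial_succ]; push_cast; ring
      rw [f1, pow_succ]
      have f2 : (n.factorial : ℝ) ≠ 0 := by positivity
      field_simp
      ring

lemma coeff_derivativeFun' (f : PowerSeries ℝ) (n : ℕ) :
    coeff n (derivativeFun f) = coeff (n + 1) f * (n + 1) :=
  coeff_derivative f n

lemma deriv_Us (c : ℝ) : derivativeFun (Us c) = C c * Us (c + 1) := by
  ext n
  rw [coeff_derivativeFun', coeff_C_mul, coeff_Us, coeff_Us]
  rw [rf_succ_left c n]
  have f1 : ((n + 1).factorial : ℝ) = (n + 1) * n.factorial := by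
    rw [Nat.factorial_succ]; push_cast; ring
  rw [f1]
  have f2 : (n.factorial : ℝ) ≠ 0 := by positivity
  have f3 : (0:ℝ) < (n:ℝ) + 1 := by positivity
  field_simp

lemma deriv_Vs (c : ℝ) : derivativeFun (Vs c) = - C c * Vs (c + 1) := by
  ext n
  rw [coeff_derivativeFun', neg_mul, map_neg, coeff_C_mul, coeff_Vs, coeff_Vs]
  rw [rf_succ_left c n]
  have f1 : ((n + 1).factorial : ℝ) = (n + 1) * n.factorial := by
    rw [Nat.factorial_succ]; push_cast; ring
  rw [f1, pow_succ]
  have f2 : (n.factorial : ℝ) ≠ 0 := by positivity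
  field_simp

/-- The ODE `(1-X^2) W' = 2ν X W` for `W = Us ν * Vs ν`. -/
lemma W_ode (ν : ℝ) :
    (1 - X ^ 2) * derivativeFun (Us ν * Vs ν)
      = C (2 * ν) * X * (Us ν * Vs ν) := by
  rw [derivativeFun_mul, deriv_Us, deriv_Vs]
  have hC : C (2 * ν) = 2 * C ν := by
    rw [map_mul, map_ofNat]
  rw [hC, ← one_sub_X_mul_Us ν, ← one_add_X_mul_Vs ν]
  simp only [smul_eq_mul]
  ring

lemma W_rec (ν : ℝ) (n : ℕ) :
    ((n : ℝ) + 2) * (coeff (n + 2)) (Us ν * Vs ν)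
      = ((n : ℝ) + 2 * ν) * (coeff n) (Us ν * Vs ν) := by
  have h := congrArg (coeff (n + 1)) (W_ode ν)
  rw [sub_mul, one_mul, map_sub, mul_assoc, coeff_C_mul] at h
  have hX : (coeff (n + 1)) (X * (Us ν * Vs ν)) = (coeff n) (Us ν * Vs ν) :=
    coeff_succ_X_mul _ _
  rw [hX, coeff_derivativeFun'] at h
  cases n with
  | zero =>
      have hX2 : (coeff 1) (X ^ 2 * derivativeFun (Us ν * Vs ν)) = 0 := by
        rw [coeff_X_pow_mul' (derivativeFun (Us ν * Vs ν)) 2 1]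
        norm_num
      rw [hX2] at h
      push_cast
      linear_combination h
  | succ n =>
      have hX2 : (coeff (n + 1 + 1)) (X ^ 2 * derivativeFun (Us ν * Vs ν))
          = (coeff n) (derivativeFun (Us ν * Vs ν)) :=
        coeff_X_pow_mul _ 2 n
      rw [hX2, coeff_derivativeFun'] at h
      push_cast
      push_cast at h
      linear_combination h

lemma W_coeff_nonneg {ν : ℝ} (hν : 0 < ν) : ∀ n, 0 ≤ (coeff n) (Us ν * Vs ν) := by
  have h0 : (coeff 0) (Us ν * Vs ν) = 1 := by
    rw [coeff_mul]
    simp [coeff_Us, coeff_Vs, rf_zero]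
  have h1 : 0 ≤ (coeff 1) (Us ν * Vs ν) := by
    rw [coeff_mul]
    simp only [Finset.Nat.sum_antidiagonal_eq_sum_range_succ_mk]
    simp [Finset.sum_range_succ, coeff_Us, coeff_Vs, rf_zero, rf_succ]
  intro n
  induction n using Nat.strong_induction_on with
  | _ n ih =>
      match n with
      | 0 => rw [h0]; norm_num
      | 1 => exact h1
      | (n + 2) =>
          have hr := W_rec ν n
          have hn : 0 ≤ (coeff n) (Us ν * Vs ν) := ih n (by omega)
          have hpos : (0:ℝ) < (n : ℝ) + 2 := by positivity
          nlinarith [hr, hn, mul_nonneg (by positivity : (0:ℝ) ≤ (n:ℝ) + 2 * ν) hn]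

/-- The main power series identity. -/
lemma main_id (ν α β : ℝ) :
    Ds (ν + α) * Ds (ν + β) - Ds ν * Ds (ν + α + β)
      = (Us ν * Vs ν) * (Ds α * Ds β) := by
  have e1 : Us (ν + α) = Us ν * Us α := (Us_mul ν α).symm
  have e2 : Us (ν + β) = Us ν * Us β := (Us_mul ν β).symm
  have e3 : Us (ν + α + β) = Us ν * Us α * Us β := by
    rw [← Us_mul (ν + α) β, e1]
  have f1 : Vs (ν + α) = Vs ν * Vs α := (Vs_mul ν α).symm
  have f2 : Vs (ν + β) = Vs ν * Vs β := (Vs_mul ν β).symm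
  have f3 : Vs (ν + α + β) = Vs ν * Vs α * Vs β := by
    rw [← Vs_mul (ν + α) β, f1]
  simp only [Ds, e1, e2, e3, f1, f2, f3]
  ring

/-- Coefficient extraction of `Ds a * Ds b` at even index. -/
lemma coeff_Ds_mul (a b : ℝ) (M : ℕ) :
    (coeff (2 * M)) (Ds a * Ds b)
      = ∑ k ∈ Finset.Icc 1 M,
          4 * ((risingFactorial a (2 * k - 1) / (2 * k - 1).factorial)
            * (risingFactorial b (2 * (M - k) + 1) / (2 * (M - k) + 1).factorial)) := by
  rw [coeff_mul, Finset.Nat.sum_antidiagonal_eq_sum_range_succ_mk]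
  have hzero : ∀ p ∈ Finset.range (2 * M + 1),
      (coeff p) (Ds a) * (coeff (2 * M - p)) (Ds b) ≠ 0 → ¬ Even p := by
    intro p _ hne hev
    apply hne
    rw [coeff_Ds, hev.neg_one_pow]
    norm_num
  rw [← Finset.sum_filter_of_ne hzero]
  refine Finset.sum_nbij' (i := fun p => (p + 1) / 2) (j := fun k => 2 * k - 1) ?_ ?_ ?_ ?_ ?_
  · intro p hp
    simp only [Finset.mem_filter, Finset.mem_range, Nat.even_iff, Nat.not_even_iff] at hp
    simp only [Finset.mem_Icc]
    omega
  · intro k hk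
    simp only [Finset.mem_Icc] at hk
    simp only [Finset.mem_filter, Finset.mem_range, Nat.not_even_iff]
    omega
  · intro p hp
    simp only [Finset.mem_filter, Finset.mem_range, Nat.not_even_iff] at hp
    omega
  · intro k hk
    simp only [Finset.mem_Icc] at hk
    omega
  · intro p hp
    simp only [Finset.mem_filter, Finset.mem_range, Nat.not_even_iff] at hp
    have h1 : 2 * ((p + 1) / 2) - 1 = p := by omega
    have h2 : 2 * (M - (p + 1) / 2) + 1 = 2 * M - p := by omega
    rw [h1, h2, coeff_Ds, coeff_Ds]
    have hop : Odd p := Nat.odd_iff.mpr hp.2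
    have hoq : Odd (2 * M - p) := by
      rw [Nat.odd_iff]
      omega
    rw [hop.neg_one_pow, hoq.neg_one_pow]
    ring

end StmtAux

open StmtAux Finset PowerSeries in
theorem stmt_10 (m : ℕ) (hm : 2 ≤ m) (μ α β : ℝ) (hμ : 0 ≤ μ) (hα : 0 < α) (hβ : 0 < β) :
    0 < ∑ k ∈ Finset.Icc 1 (m - 1),
      (risingFactorial (μ + α) (2 * k) * risingFactorial (μ + β) (2 * (m - k))
        - risingFactorial μ (2 * k) * risingFactorial (μ + α + β) (2 * (m - k))) /
        ((Nat.factorial (2 * k - 1) : ℝ) * (Nat.factorial (2 * (m - k) - 1) : ℝ)) := by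
  set ν : ℝ := μ + 1 with hν
  have hν0 : (0:ℝ) < ν := by positivity
  set M : ℕ := m - 1 with hM
  have hM1 : 1 ≤ M := by omega
  -- Φ sums
  set Φ : ℝ → ℝ → ℝ := fun a b => ∑ k ∈ Finset.Icc 1 M,
      (risingFactorial a (2 * k - 1) / (2 * k - 1).factorial)
        * (risingFactorial b (2 * (M - k) + 1) / (2 * (M - k) + 1).factorial) with hΦ
  -- rewrite the target sum
  have hstep : ∑ k ∈ Finset.Icc 1 (m - 1),
      (risingFactorial (μ + α) (2 * k) * risingFactorial (μ + β) (2 * (m - k))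
        - risingFactorial μ (2 * k) * risingFactorial (μ + α + β) (2 * (m - k))) /
        ((Nat.factorial (2 * k - 1) : ℝ) * (Nat.factorial (2 * (m - k) - 1) : ℝ))
      = (μ + α) * (μ + β) * Φ (ν + α) (ν + β) - μ * (μ + α + β) * Φ ν (ν + α + β) := by
    rw [hΦ, ← hM]
    rw [Finset.mul_sum, Finset.mul_sum, ← Finset.sum_sub_distrib]
    apply Finset.sum_congr rfl
    intro k hk
    simp only [Finset.mem_Icc] at hk
    have e1 : 2 * k = (2 * k - 1) + 1 := by omega
    have e2 : 2 * (m - k) = (2 * (M - k) + 1) + 1 := by omega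
    have e3 : 2 * (m - k) - 1 = 2 * (M - k) + 1 := by omega
    rw [e3, e1, e2, rf_succ_left (μ + α), rf_succ_left (μ + β), rf_succ_left μ,
      rf_succ_left (μ + α + β)]
    have ha : μ + α + 1 = ν + α := by rw [hν]; ring
    have hb : μ + β + 1 = ν + β := by rw [hν]; ring
    have hc : μ + 1 = ν := rfl
    have hd : μ + α + β + 1 = ν + α + β := by rw [hν]; ring
    rw [ha, hb, hc, hd]
    simp only [Nat.add_sub_cancel]
    have f1 : ((2 * k - 1).factorial : ℝ) ≠ 0 := by positivity
    have f2 : ((2 * (M - k) + 1).factorial : ℝ) ≠ 0 := by positivity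
    field_simp
  rw [hstep]
  -- coefficient identities
  have hcAB : (coeff (2 * M)) (Ds (ν + α) * Ds (ν + β)) = 4 * Φ (ν + α) (ν + β) := by
    rw [coeff_Ds_mul, hΦ, Finset.mul_sum]
  have hcNN : (coeff (2 * M)) (Ds ν * Ds (ν + α + β)) = 4 * Φ ν (ν + α + β) := by
    rw [coeff_Ds_mul, hΦ, Finset.mul_sum]
  have hid := congrArg (coeff (2 * M)) (main_id ν α β)
  rw [map_sub, hcAB, hcNN] at hid
  -- RHS coefficient is nonnegative
  have hrhs : 0 ≤ (coeff (2 * M)) ((Us ν * Vs ν) * (Ds α * Ds β)) := by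
    rw [coeff_mul]
    apply Finset.sum_nonneg
    intro x hx
    apply mul_nonneg (W_coeff_nonneg hν0 x.1)
    rw [coeff_mul]
    apply Finset.sum_nonneg
    intro y hy
    exact mul_nonneg (coeff_Ds_nonneg hα.le y.1) (coeff_Ds_nonneg hβ.le y.2)
  -- Φ (ν+α) (ν+β) > 0
  have hΦpos : 0 < Φ (ν + α) (ν + β) := by
    rw [hΦ]
    apply Finset.sum_pos
    · intro k hk
      have p1 : 0 < risingFactorial (ν + α) (2 * k - 1) := rf_pos (by positivity) _
      have p2 : 0 < risingFactorial (ν + β) (2 * (M - k) + 1) := rf_pos (by positivity) _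
      positivity
    · exact ⟨1, Finset.mem_Icc.mpr ⟨le_refl 1, hM1⟩⟩
  -- assemble
  have key : 4 * Φ (ν + α) (ν + β) - 4 * Φ ν (ν + α + β)
      = (coeff (2 * M)) ((Us ν * Vs ν) * (Ds α * Ds β)) := hid
  have hsplit : (μ + α) * (μ + β) * Φ (ν + α) (ν + β) - μ * (μ + α + β) * Φ ν (ν + α + β)
      = α * β * Φ (ν + α) (ν + β)
        + μ * (μ + α + β) * ((4 * Φ (ν + α) (ν + β) - 4 * Φ ν (ν + α + β)) / 4) := by
    ring
  rw [hsplit, key]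
  have h1 : 0 < α * β * Φ (ν + α) (ν + β) := by positivity
  have h2 : 0 ≤ μ * (μ + α + β) * ((coeff (2 * M)) ((Us ν * Vs ν) * (Ds α * Ds β)) / 4) := by
    apply mul_nonneg
    · apply mul_nonneg hμ (by positivity)
    · linarith
  linarith
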